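/- There is a well-defined function φ : 𝒯 → ω, invariant under conversion, satisfying φ(T)=2 if T ≃ Prop, φ(T)=3+j if T ≃ Type_j, φ(T)=1 for all other T ∈ Π_0, and φ(T)=φ(A)·φ(B) whenever T ≃ Qx:A.B for Q ∈ {Π,Σ}; moreover φ takes only positive values. -/

import Mathlib

namespace ECC

/-- Terms of Luo's Extended Calculus of Constructions, in de Bruijn representation. -/
inductive Term : Type
  | var   : ℕ → Term
  | prop  : Term
  | type  : ℕ → Term
  | pi    : Term → Term → Term
  | sigma : Term → Term → Term
  | lam   : Term → Term → Term
  | app   : Term → Term → Term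
  | pair  : Term → Term → Term → Term   -- ⟨M, N⟩_B with type annotation B
  | proj1 : Term → Term
  | proj2 : Term → Term
deriving DecidableEq

/-- Lift (shift by `d`) all de Bruijn indices ≥ `k`. -/
def lift (d : ℕ) : ℕ → Term → Term
  | k, .var n       => if n < k then .var n else .var (n + d)
  | _, .prop        => .prop
  | _, .type j      => .type j
  | k, .pi A B      => .pi (lift d k A) (lift d (k+1) B)
  | k, .sigma A B   => .sigma (lift d k A) (lift d (k+1) B)
  | k, .lam A M     => .lam (lift d k A) (lift d (k+1) M)
  | k, .app M N     => .app (lift d k M) (lift d k N)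
  | k, .pair M N B  => .pair (lift d k M) (lift d k N) (lift d k B)
  | k, .proj1 M     => .proj1 (lift d k M)
  | k, .proj2 M     => .proj2 (lift d k M)

/-- Capture-avoiding substitution `[N/x]A` of the term `N` for the variable `x` in `A`. -/
def subst (N : Term) : ℕ → Term → Term
  | k, .var n       => if n < k then .var n else if n = k then lift k 0 N else .var (n - 1)
  | _, .prop        => .prop
  | _, .type j      => .type j
  | k, .pi A B      => .pi (subst N k A) (subst N (k+1) B)
  | k, .sigma A B   => .sigma (subst N k A) (subst N (k+1) B)
  | k, .lam A M     => .lam (subst N k A) (subst N (k+1) M)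
  | k, .app M M'    => .app (subst N k M) (subst N k M')
  | k, .pair M M' B => .pair (subst N k M) (subst N k M') (subst N k B)
  | k, .proj1 M     => .proj1 (subst N k M)
  | k, .proj2 M     => .proj2 (subst N k M)

/-- `[N/x₀]B` : substitution for the outermost bound variable. -/
def subst0 (B N : Term) : Term := subst N 0 B

/-- One-step reduction (β together with the projection reductions, closed under all
term-formation congruences). -/
inductive Red : Term → Term → Prop
  | beta    : Red (.app (.lam A M) N) (subst0 M N)
  | pr1     : Red (.proj1 (.pair M N B)) M
  | pr2     : Red (.proj2 (.pair M N B)) N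
  | piL     : Red A A' → Red (.pi A B) (.pi A' B)
  | piR     : Red B B' → Red (.pi A B) (.pi A B')
  | sigmaL  : Red A A' → Red (.sigma A B) (.sigma A' B)
  | sigmaR  : Red B B' → Red (.sigma A B) (.sigma A B')
  | lamL    : Red A A' → Red (.lam A M) (.lam A' M)
  | lamR    : Red M M' → Red (.lam A M) (.lam A M')
  | appL    : Red M M' → Red (.app M N) (.app M' N)
  | appR    : Red N N' → Red (.app M N) (.app M N')
  | pairL   : Red M M' → Red (.pair M N B) (.pair M' N B)
  | pairR   : Red N N' → Red (.pair M N B) (.pair M N' B)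
  | pairB   : Red B B' → Red (.pair M N B) (.pair M N B')
  | proj1C  : Red M M' → Red (.proj1 M) (.proj1 M')
  | proj2C  : Red M M' → Red (.proj2 M) (.proj2 M')

/-- Conversion `≃` : the equivalence relation generated by reduction. -/
def Conv : Term → Term → Prop := Relation.EqvGen Red

/-- `A` has a normal form. -/
def HasNF (A : Term) : Prop :=
  ∃ B, Relation.ReflTransGen Red A B ∧ ∀ C, ¬ Red B C

/-- `𝒯` : the set of normalisable terms. -/
def Tset : Set Term := {A | HasNF A}

/-- Universes are `Prop` and the `Type_j`. -/
def IsUniv (T : Term) : Prop := T = .prop ∨ ∃ j, T = .type j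

/-- The cumulativity relation `⪯` : the smallest preorder containing conversion,
the universe order, congruence for Π in the codomain, and congruence for Σ in both
components. -/
inductive Cum : Term → Term → Prop
  | conv     : Conv A B → Cum A B
  | propType : Cum .prop (.type 0)
  | typeType : j ≤ k → Cum (.type j) (.type k)
  | pi       : Conv A A' → Cum B B' → Cum (.pi A B) (.pi A' B')
  | sigma    : Cum A A' → Cum B B' → Cum (.sigma A B) (.sigma A' B')
  | trans    : Cum A B → Cum B C → Cum A C

/-- The strict cumulativity relation `≺` : `A ⪯ B` and `A ≄ B`. -/
def SCum (A B : Term) : Prop := Cum A B ∧ ¬ Conv A B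

/-- The stratified cumulativity relations `⪯ᵢ`. -/
inductive CumL : ℕ → Term → Term → Prop
  | conv     : Conv A B → CumL i A B
  | propType : CumL i .prop (.type j)
  | typeType : j < k → CumL i (.type j) (.type k)
  | succ     : CumL i A B → CumL (i+1) A B
  | pi       : Conv M (.pi A B) → Conv N (.pi A' B') → Conv A A' → CumL i B B' →
               CumL (i+1) M N
  | sigma    : Conv M (.sigma A B) → Conv N (.sigma A' B') → CumL i A A' → CumL i B B' →
               CumL (i+1) M N

/-- Strict stratified cumulativity `≺ᵢ`. -/
def SCumL (i : ℕ) (A B : Term) : Prop := CumL i A B ∧ ¬ Conv A B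

/-- Is the outermost symbol of a term Π or Σ? -/
def BinderHeaded : Term → Prop
  | .pi _ _    => True
  | .sigma _ _ => True
  | _          => False

/-- The base stratum: normalisable terms not convertible to a binder-headed
normalisable term. -/
def Base : Set Term :=
  {T | HasNF T ∧ ¬ ∃ B, HasNF B ∧ BinderHeaded B ∧ Conv T B}

/-- The stratification `(Π_n, Σ_n)` of `𝒯`. -/
def Strata : ℕ → Set Term × Set Term
  | 0 => (Base, Base)
  | n+1 =>
    ({T | ∃ k l, ∃ _ : k + l = n, ∃ A B, HasNF (Term.pi A B) ∧ Conv T (Term.pi A B) ∧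
        A ∈ (Strata k).1 ∪ (Strata k).2 ∧ B ∈ (Strata l).1 ∪ (Strata l).2},
     {T | ∃ k l, ∃ _ : k + l = n, ∃ A B, HasNF (Term.sigma A B) ∧ Conv T (Term.sigma A B) ∧
        A ∈ (Strata k).1 ∪ (Strata k).2 ∧ B ∈ (Strata l).1 ∪ (Strata l).2})
termination_by n => n
decreasing_by all_goals omega

/-- The stratum `Π_n`. -/
def PiStr (n : ℕ) : Set Term := (Strata n).1

/-- The stratum `Σ_n`. -/
def SigStr (n : ℕ) : Set Term := (Strata n).2

/-- The specification of the rank function `φ : 𝒯 → ω`. -/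
def PhiSpec (φ : Term → ℕ) : Prop :=
  (∀ M N, HasNF M → HasNF N → Conv M N → φ M = φ N) ∧
  (∀ T, HasNF T → Conv T .prop → φ T = 2) ∧
  (∀ T j, HasNF T → Conv T (.type j) → φ T = 3 + j) ∧
  (∀ T, T ∈ PiStr 0 → ¬ Conv T .prop → (∀ j, ¬ Conv T (.type j)) → φ T = 1) ∧
  (∀ T A B, HasNF T → (Conv T (.pi A B) ∨ Conv T (.sigma A B)) → φ T = φ A * φ B) ∧
  (∀ T, HasNF T → 0 < φ T)

mutual
/-- Valid contexts of ECC (de Bruijn: the head of the list is the most recent entry). -/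
inductive Valid : List Term → Prop
  | nil  : Valid []
  | cons : Typing Γ A (.type j) → Valid (A :: Γ)

/-- The typing judgement `Γ ⊢ M : A` of ECC. -/
inductive Typing : List Term → Term → Term → Prop
  | prop  : Valid Γ → Typing Γ .prop (.type 0)
  | type  : Valid Γ → Typing Γ (.type j) (.type (j+1))
  | var   : Valid Γ → Γ[n]? = some A → Typing Γ (.var n) (lift (n+1) 0 A)
  | pi1   : Typing Γ A (.type j) → Typing (A :: Γ) B .prop →
            Typing Γ (.pi A B) .prop
  | pi2   : Typing Γ A (.type j) → Typing (A :: Γ) B (.type j) →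
            Typing Γ (.pi A B) (.type j)
  | sig   : Typing Γ A (.type j) → Typing (A :: Γ) B (.type j) →
            Typing Γ (.sigma A B) (.type j)
  | lam   : Typing (A :: Γ) M B → Typing Γ (.lam A M) (.pi A B)
  | app   : Typing Γ M (.pi A B) → Typing Γ N A → Typing Γ (.app M N) (subst0 B N)
  | pair  : Typing Γ M A → Typing Γ N (subst0 B M) → Typing (A :: Γ) B (.type j) →
            Typing Γ (.pair M N (.sigma A B)) (.sigma A B)
  | proj1 : Typing Γ M (.sigma A B) → Typing Γ (.proj1 M) A
  | proj2 : Typing Γ M (.sigma A B) → Typing Γ (.proj2 M) (subst0 B (.proj1 M))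
  | cum   : Typing Γ M A → Typing Γ B (.type j) → Cum A B → Typing Γ M B
end

/-- `Type_j` for `j ∈ ℤ`, with the convention `Type_{-1} = Prop`. -/
def TType (j : ℤ) : Term := if j < 0 then .prop else .type j.toNat

/-- The typing judgement of the restricted system `ECC⁻`: the rules
`(Π2)(Σ)(app)(pair)(⪯)` of ECC are replaced by `(Π2')(Σ')(app')(pair')` and `(≃)_ρ`. -/
inductive TypingM : List Term → Term → Term → Prop
  | prop  : Valid Γ → TypingM Γ .prop (.type 0)
  | type  : Valid Γ → TypingM Γ (.type j) (.type (j+1))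
  | var   : Valid Γ → Γ[n]? = some A → TypingM Γ (.var n) (lift (n+1) 0 A)
  | pi1   : TypingM Γ A (.type j) → TypingM (A :: Γ) B .prop →
            TypingM Γ (.pi A B) .prop
  | pi2'  : TypingM Γ A (TType j) → TypingM (A :: Γ) B (TType k) → 0 ≤ k →
            TypingM Γ (.pi A B) (TType (max (max j k) 0))
  | sig'  : TypingM Γ A (TType j) → TypingM (A :: Γ) B (TType k) →
            TypingM Γ (.sigma A B) (TType (max (max j k) 0))
  | lam   : TypingM (A :: Γ) M B → TypingM Γ (.lam A M) (.pi A B)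
  | app'  : TypingM Γ M (.pi A B) → TypingM Γ N A' → Cum A' A →
            TypingM Γ (.app M N) (subst0 B N)
  | pair' : TypingM Γ M A → TypingM Γ N C → TypingM (A' :: Γ) B' (.type j) →
            Cum A A' → Cum C (subst0 B' M) →
            TypingM Γ (.pair M N (.sigma A' B')) (.sigma A' B')
  | proj1 : TypingM Γ M (.sigma A B) → TypingM Γ (.proj1 M) A
  | proj2 : TypingM Γ M (.sigma A B) → TypingM Γ (.proj2 M) (subst0 B (.proj1 M))
  | conv  : TypingM Γ M A → Conv A A' → Typing Γ A' (.type j) → TypingM Γ M A'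

end ECC

namespace ECC

open Relation

/- ### de Bruijn lemmas -/

theorem lift_lift_ge (d e : ℕ) : ∀ (N : Term) (i k : ℕ), i + e ≤ k →
    lift d k (lift e i N) = lift e i (lift d (k - e) N) := by
  intro N
  induction N with
  | var n =>
    intro i k h
    simp only [lift]
    split_ifs <;> simp only [lift] <;>
      split_ifs <;> first | rfl | (exfalso; omega) | (congr 1 <;> omega)
  | prop => intros; rfl
  | type j => intros; rfl
  | pi A B ihA ihB =>
    intro i k h
    simp only [lift]
    rw [ihA _ _ h, ihB (i+1) (k+1) (by omega), show k+1-e = k-e+1 by omega]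
  | sigma A B ihA ihB =>
    intro i k h
    simp only [lift]
    rw [ihA _ _ h, ihB (i+1) (k+1) (by omega), show k+1-e = k-e+1 by omega]
  | lam A M ihA ihM =>
    intro i k h
    simp only [lift]
    rw [ihA _ _ h, ihM (i+1) (k+1) (by omega), show k+1-e = k-e+1 by omega]
  | app M N ihM ihN =>
    intro i k h
    simp only [lift, ihM _ _ h, ihN _ _ h]
  | pair M N B ihM ihN ihB =>
    intro i k h
    simp only [lift, ihM _ _ h, ihN _ _ h, ihB _ _ h]
  | proj1 M ihM => intro i k h; simp only [lift, ihM _ _ h]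
  | proj2 M ihM => intro i k h; simp only [lift, ihM _ _ h]

theorem lift_add (e m : ℕ) : ∀ (N : Term) (p i : ℕ), p ≤ i → i ≤ m + p →
    lift e i (lift m p N) = lift (e + m) p N := by
  intro N
  induction N with
  | var n =>
    intro p i h1 h2
    simp only [lift]
    split_ifs <;> simp only [lift] <;>
      split_ifs <;> first | rfl | (exfalso; omega) | (congr 1 <;> omega)
  | prop => intros; rfl
  | type j => intros; rfl
  | pi A B ihA ihB =>
    intro p i h1 h2
    simp only [lift]
    rw [ihA _ _ h1 h2, ihB (p+1) (i+1) (by omega) (by omega)]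
  | sigma A B ihA ihB =>
    intro p i h1 h2
    simp only [lift]
    rw [ihA _ _ h1 h2, ihB (p+1) (i+1) (by omega) (by omega)]
  | lam A M ihA ihM =>
    intro p i h1 h2
    simp only [lift]
    rw [ihA _ _ h1 h2, ihM (p+1) (i+1) (by omega) (by omega)]
  | app M N ihM ihN =>
    intro p i h1 h2
    simp only [lift, ihM _ _ h1 h2, ihN _ _ h1 h2]
  | pair M N B ihM ihN ihB =>
    intro p i h1 h2
    simp only [lift, ihM _ _ h1 h2, ihN _ _ h1 h2, ihB _ _ h1 h2]
  | proj1 M ihM => intro p i h1 h2; simp only [lift, ihM _ _ h1 h2]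
  | proj2 M ihM => intro p i h1 h2; simp only [lift, ihM _ _ h1 h2]

theorem subst_lift_cancel (Q : Term) (e : ℕ) : ∀ (N : Term) (i j : ℕ), i ≤ j → j < i + e →
    subst Q j (lift e i N) = lift (e - 1) i N := by
  intro N
  induction N with
  | var n =>
    intro i j h1 h2
    simp only [lift, subst]
    split_ifs <;> simp only [subst] <;>
      split_ifs <;> first | rfl | (exfalso; omega) | (congr 1 <;> omega)
  | prop => intros; rfl
  | type j => intros; rfl
  | pi A B ihA ihB =>
    intro i j h1 h2
    simp only [lift, subst]
    rw [ihA _ _ h1 h2, ihB (i+1) (j+1) (by omega) (by omega)]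
  | sigma A B ihA ihB =>
    intro i j h1 h2
    simp only [lift, subst]
    rw [ihA _ _ h1 h2, ihB (i+1) (j+1) (by omega) (by omega)]
  | lam A M ihA ihM =>
    intro i j h1 h2
    simp only [lift, subst]
    rw [ihA _ _ h1 h2, ihM (i+1) (j+1) (by omega) (by omega)]
  | app M N ihM ihN =>
    intro i j h1 h2
    simp only [lift, subst, ihM _ _ h1 h2, ihN _ _ h1 h2]
  | pair M N B ihM ihN ihB =>
    intro i j h1 h2
    simp only [lift, subst, ihM _ _ h1 h2, ihN _ _ h1 h2, ihB _ _ h1 h2]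
  | proj1 M ihM => intro i j h1 h2; simp only [lift, subst, ihM _ _ h1 h2]
  | proj2 M ihM => intro i j h1 h2; simp only [lift, subst, ihM _ _ h1 h2]

theorem subst_lift (N : Term) (e : ℕ) : ∀ (P : Term) (i k : ℕ), i + e ≤ k →
    subst N k (lift e i P) = lift e i (subst N (k - e) P) := by
  intro P
  induction P with
  | var n =>
    intro i k h
    simp only [lift, subst]
    split_ifs <;> simp only [lift, subst] <;> split_ifs <;>
      first
        | rfl | (exfalso; omega) | (congr 1 <;> omega)
        | (rw [lift_add _ _ _ _ _ (by omega) (by omega)]; congr 1; omega)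
  | prop => intros; rfl
  | type j => intros; rfl
  | pi A B ihA ihB =>
    intro i k h
    simp only [lift, subst]
    rw [ihA _ _ h, ihB (i+1) (k+1) (by omega), show k+1-e = k-e+1 by omega]
  | sigma A B ihA ihB =>
    intro i k h
    simp only [lift, subst]
    rw [ihA _ _ h, ihB (i+1) (k+1) (by omega), show k+1-e = k-e+1 by omega]
  | lam A M ihA ihM =>
    intro i k h
    simp only [lift, subst]
    rw [ihA _ _ h, ihM (i+1) (k+1) (by omega), show k+1-e = k-e+1 by omega]
  | app M M' ihM ihM' =>
    intro i k h
    simp only [lift, subst, ihM _ _ h, ihM' _ _ h]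
  | pair M M' B ihM ihM' ihB =>
    intro i k h
    simp only [lift, subst, ihM _ _ h, ihM' _ _ h, ihB _ _ h]
  | proj1 M ihM => intro i k h; simp only [lift, subst, ihM _ _ h]
  | proj2 M ihM => intro i k h; simp only [lift, subst, ihM _ _ h]

theorem lift_subst (d : ℕ) (N : Term) : ∀ (M : Term) (j k : ℕ), j ≤ k →
    lift d k (subst N j M) = subst (lift d (k - j) N) j (lift d (k + 1) M) := by
  intro M
  induction M with
  | var n =>
    intro j k h
    simp only [lift, subst]
    split_ifs <;> simp only [lift, subst] <;> split_ifs <;>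
      first
        | rfl | (exfalso; omega) | (congr 1 <;> omega)
        | (rw [lift_lift_ge _ _ _ _ _ (by omega)]; try (first | rfl | (congr 1 <;> omega)))
  | prop => intros; rfl
  | type j => intros; rfl
  | pi A B ihA ihB =>
    intro j k h
    simp only [lift, subst]
    rw [ihA _ _ h, ihB (j+1) (k+1) (by omega), show k+1-(j+1) = k-j by omega]
  | sigma A B ihA ihB =>
    intro j k h
    simp only [lift, subst]
    rw [ihA _ _ h, ihB (j+1) (k+1) (by omega), show k+1-(j+1) = k-j by omega]
  | lam A M ihA ihM =>
    intro j k h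
    simp only [lift, subst]
    rw [ihA _ _ h, ihM (j+1) (k+1) (by omega), show k+1-(j+1) = k-j by omega]
  | app M M' ihM ihM' =>
    intro j k h
    simp only [lift, subst, ihM _ _ h, ihM' _ _ h]
  | pair M M' B ihM ihM' ihB =>
    intro j k h
    simp only [lift, subst, ihM _ _ h, ihM' _ _ h, ihB _ _ h]
  | proj1 M ihM => intro j k h; simp only [lift, subst, ihM _ _ h]
  | proj2 M ihM => intro j k h; simp only [lift, subst, ihM _ _ h]

theorem subst_subst (N P : Term) : ∀ (M : Term) (j k : ℕ), j ≤ k →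
    subst N k (subst P j M) = subst (subst N (k - j) P) j (subst N (k + 1) M) := by
  intro M
  induction M with
  | var n =>
    intro j k h
    by_cases h2 : n = j
    · subst h2
      have e1 : subst P n (.var n) = lift n 0 P := by simp [subst]
      have e2 : subst N (k+1) (.var n) = .var n := by
        simp [subst, show n < k + 1 by omega]
      show subst N k (subst P n (.var n))
          = subst (subst N (k - n) P) n (subst N (k + 1) (.var n))
      rw [e1, e2, subst_lift N n P 0 k (by omega)]
      simp [subst]
    · show subst N k (subst P j (.var n))
          = subst (subst N (k - j) P) j (subst N (k + 1) (.var n))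
      simp only [subst]
      split_ifs <;> simp only [subst] <;> split_ifs <;>
        first
          | rfl | (exfalso; omega) | (congr 1 <;> omega)
          | (rw [subst_lift_cancel (subst N (k - j) P) (k+1) N 0 j (by omega) (by omega)]
             simp)
  | prop => intros; rfl
  | type j => intros; rfl
  | pi A B ihA ihB =>
    intro j k h
    simp only [subst]
    rw [ihA _ _ h, ihB (j+1) (k+1) (by omega), show k+1-(j+1) = k-j by omega]
  | sigma A B ihA ihB =>
    intro j k h
    simp only [subst]
    rw [ihA _ _ h, ihB (j+1) (k+1) (by omega), show k+1-(j+1) = k-j by omega]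
  | lam A M ihA ihM =>
    intro j k h
    simp only [subst]
    rw [ihA _ _ h, ihM (j+1) (k+1) (by omega), show k+1-(j+1) = k-j by omega]
  | app M M' ihM ihM' =>
    intro j k h
    simp only [subst, ihM _ _ h, ihM' _ _ h]
  | pair M M' B ihM ihM' ihB =>
    intro j k h
    simp only [subst, ihM _ _ h, ihM' _ _ h, ihB _ _ h]
  | proj1 M ihM => intro j k h; simp only [subst, ihM _ _ h]
  | proj2 M ihM => intro j k h; simp only [subst, ihM _ _ h]

end ECC
namespace ECC

open Relation

/- ### Parallel reduction -/

inductive Par : Term → Term → Prop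
  | var   : Par (.var n) (.var n)
  | prop  : Par .prop .prop
  | type  : Par (.type j) (.type j)
  | pi    : Par A A' → Par B B' → Par (.pi A B) (.pi A' B')
  | sigma : Par A A' → Par B B' → Par (.sigma A B) (.sigma A' B')
  | lam   : Par A A' → Par M M' → Par (.lam A M) (.lam A' M')
  | app   : Par M M' → Par N N' → Par (.app M N) (.app M' N')
  | pair  : Par M M' → Par N N' → Par B B' → Par (.pair M N B) (.pair M' N' B')
  | proj1 : Par M M' → Par (.proj1 M) (.proj1 M')
  | proj2 : Par M M' → Par (.proj2 M) (.proj2 M')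
  | beta  : Par M M' → Par N N' → Par (.app (.lam A M) N) (subst0 M' N')
  | pr1   : Par M M' → Par (.proj1 (.pair M N B)) M'
  | pr2   : Par N N' → Par (.proj2 (.pair M N B)) N'

theorem Par.refl : ∀ M : Term, Par M M := by
  intro M
  induction M with
  | var n => exact Par.var
  | prop => exact Par.prop
  | type j => exact Par.type
  | pi A B ihA ihB => exact Par.pi ihA ihB
  | sigma A B ihA ihB => exact Par.sigma ihA ihB
  | lam A M ihA ihM => exact Par.lam ihA ihM
  | app M N ihM ihN => exact Par.app ihM ihN
  | pair M N B ihM ihN ihB => exact Par.pair ihM ihN ihB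
  | proj1 M ihM => exact Par.proj1 ihM
  | proj2 M ihM => exact Par.proj2 ihM

theorem par_of_red (h : Red M N) : Par M N := by
  induction h with
  | beta => exact Par.beta (Par.refl _) (Par.refl _)
  | pr1 => exact Par.pr1 (Par.refl _)
  | pr2 => exact Par.pr2 (Par.refl _)
  | piL _ ih => exact Par.pi ih (Par.refl _)
  | piR _ ih => exact Par.pi (Par.refl _) ih
  | sigmaL _ ih => exact Par.sigma ih (Par.refl _)
  | sigmaR _ ih => exact Par.sigma (Par.refl _) ih
  | lamL _ ih => exact Par.lam ih (Par.refl _)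
  | lamR _ ih => exact Par.lam (Par.refl _) ih
  | appL _ ih => exact Par.app ih (Par.refl _)
  | appR _ ih => exact Par.app (Par.refl _) ih
  | pairL _ ih => exact Par.pair ih (Par.refl _) (Par.refl _)
  | pairR _ ih => exact Par.pair (Par.refl _) ih (Par.refl _)
  | pairB _ ih => exact Par.pair (Par.refl _) (Par.refl _) ih
  | proj1C _ ih => exact Par.proj1 ih
  | proj2C _ ih => exact Par.proj2 ih

/- multi-step congruences -/

theorem rtg_pi_cong (hA : ReflTransGen Red A A') (hB : ReflTransGen Red B B') :
    ReflTransGen Red (.pi A B) (.pi A' B') :=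
  (ReflTransGen.lift (fun X => Term.pi X B) (fun _ _ h => Red.piL h) _ _ hA).trans
    (ReflTransGen.lift (fun X => Term.pi A' X) (fun _ _ h => Red.piR h) _ _ hB)

theorem rtg_sigma_cong (hA : ReflTransGen Red A A') (hB : ReflTransGen Red B B') :
    ReflTransGen Red (.sigma A B) (.sigma A' B') :=
  (ReflTransGen.lift (fun X => Term.sigma X B) (fun _ _ h => Red.sigmaL h) _ _ hA).trans
    (ReflTransGen.lift (fun X => Term.sigma A' X) (fun _ _ h => Red.sigmaR h) _ _ hB)

theorem rtg_lam_cong (hA : ReflTransGen Red A A') (hM : ReflTransGen Red M M') :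
    ReflTransGen Red (.lam A M) (.lam A' M') :=
  (ReflTransGen.lift (fun X => Term.lam X M) (fun _ _ h => Red.lamL h) _ _ hA).trans
    (ReflTransGen.lift (fun X => Term.lam A' X) (fun _ _ h => Red.lamR h) _ _ hM)

theorem rtg_app_cong (hM : ReflTransGen Red M M') (hN : ReflTransGen Red N N') :
    ReflTransGen Red (.app M N) (.app M' N') :=
  (ReflTransGen.lift (fun X => Term.app X N) (fun _ _ h => Red.appL h) _ _ hM).trans
    (ReflTransGen.lift (fun X => Term.app M' X) (fun _ _ h => Red.appR h) _ _ hN)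

theorem rtg_pair_cong (hM : ReflTransGen Red M M') (hN : ReflTransGen Red N N')
    (hB : ReflTransGen Red B B') :
    ReflTransGen Red (.pair M N B) (.pair M' N' B') :=
  ((ReflTransGen.lift (fun X => Term.pair X N B) (fun _ _ h => Red.pairL h) _ _ hM).trans
    (ReflTransGen.lift (fun X => Term.pair M' X B) (fun _ _ h => Red.pairR h) _ _ hN)).trans
    (ReflTransGen.lift (fun X => Term.pair M' N' X) (fun _ _ h => Red.pairB h) _ _ hB)

theorem rtg_proj1_cong (hM : ReflTransGen Red M M') :
    ReflTransGen Red (.proj1 M) (.proj1 M') :=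
  ReflTransGen.lift Term.proj1 (fun _ _ h => Red.proj1C h) _ _ hM

theorem rtg_proj2_cong (hM : ReflTransGen Red M M') :
    ReflTransGen Red (.proj2 M) (.proj2 M') :=
  ReflTransGen.lift Term.proj2 (fun _ _ h => Red.proj2C h) _ _ hM

theorem rtg_of_par (h : Par M N) : ReflTransGen Red M N := by
  induction h with
  | var => exact ReflTransGen.refl
  | prop => exact ReflTransGen.refl
  | type => exact ReflTransGen.refl
  | pi _ _ ihA ihB => exact rtg_pi_cong ihA ihB
  | sigma _ _ ihA ihB => exact rtg_sigma_cong ihA ihB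
  | lam _ _ ihA ihM => exact rtg_lam_cong ihA ihM
  | app _ _ ihM ihN => exact rtg_app_cong ihM ihN
  | pair _ _ _ ihM ihN ihB => exact rtg_pair_cong ihM ihN ihB
  | proj1 _ ihM => exact rtg_proj1_cong ihM
  | proj2 _ ihM => exact rtg_proj2_cong ihM
  | beta _ _ ihM ihN =>
    exact (rtg_app_cong (rtg_lam_cong ReflTransGen.refl ihM) ihN).trans
      (ReflTransGen.single Red.beta)
  | pr1 _ ihM =>
    exact (rtg_proj1_cong (rtg_pair_cong ihM ReflTransGen.refl ReflTransGen.refl)).trans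
      (ReflTransGen.single Red.pr1)
  | pr2 _ ihN =>
    exact (rtg_proj2_cong (rtg_pair_cong ReflTransGen.refl ihN ReflTransGen.refl)).trans
      (ReflTransGen.single Red.pr2)

theorem par_lift (h : Par M N) : ∀ d k, Par (lift d k M) (lift d k N) := by
  induction h with
  | var =>
    intro d k
    simp only [lift]; split_ifs <;> exact Par.var
  | prop => intro d k; exact Par.prop
  | type => intro d k; exact Par.type
  | pi _ _ ihA ihB => intro d k; exact Par.pi (ihA d k) (ihB d (k+1))
  | sigma _ _ ihA ihB => intro d k; exact Par.sigma (ihA d k) (ihB d (k+1))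
  | lam _ _ ihA ihM => intro d k; exact Par.lam (ihA d k) (ihM d (k+1))
  | app _ _ ihM ihN => intro d k; exact Par.app (ihM d k) (ihN d k)
  | pair _ _ _ ihM ihN ihB => intro d k; exact Par.pair (ihM d k) (ihN d k) (ihB d k)
  | proj1 _ ihM => intro d k; exact Par.proj1 (ihM d k)
  | proj2 _ ihM => intro d k; exact Par.proj2 (ihM d k)
  | @beta M M' N N' A _ _ ihM ihN =>
    intro d k
    have : lift d k (subst0 M' N') = subst0 (lift d (k+1) M') (lift d k N') := by
      unfold subst0
      rw [lift_subst d N' M' 0 k (Nat.zero_le k)]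
      simp
    rw [this]
    exact Par.beta (ihM d (k+1)) (ihN d k)
  | pr1 _ ihM => intro d k; exact Par.pr1 (ihM d k)
  | pr2 _ ihN => intro d k; exact Par.pr2 (ihN d k)

theorem par_subst (hN : Par N N') (h : Par M M') :
    ∀ k, Par (subst N k M) (subst N' k M') := by
  induction h with
  | @var n =>
    intro k
    simp only [subst]
    split_ifs with h1 h2
    · exact Par.var
    · exact par_lift hN k 0
    · exact Par.var
  | prop => intro k; exact Par.prop
  | type => intro k; exact Par.type
  | pi _ _ ihA ihB => intro k; exact Par.pi (ihA k) (ihB (k+1))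
  | sigma _ _ ihA ihB => intro k; exact Par.sigma (ihA k) (ihB (k+1))
  | lam _ _ ihA ihM => intro k; exact Par.lam (ihA k) (ihM (k+1))
  | app _ _ ihM ihN => intro k; exact Par.app (ihM k) (ihN k)
  | pair _ _ _ ihM ihN ihB => intro k; exact Par.pair (ihM k) (ihN k) (ihB k)
  | proj1 _ ihM => intro k; exact Par.proj1 (ihM k)
  | proj2 _ ihM => intro k; exact Par.proj2 (ihM k)
  | @beta P P' Q Q' A _ _ ihP ihQ =>
    intro k
    simp only [subst]
    have : subst N' k (subst0 P' Q') = subst0 (subst N' (k+1) P') (subst N' k Q') := by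
      unfold subst0
      rw [subst_subst N' Q' P' 0 k (Nat.zero_le k)]
      simp
    rw [this]
    exact Par.beta (ihP (k+1)) (ihQ k)
  | pr1 _ ihM => intro k; simp only [subst]; exact Par.pr1 (ihM k)
  | pr2 _ ihN => intro k; simp only [subst]; exact Par.pr2 (ihN k)

end ECC
namespace ECC

open Relation

/-- Complete development. -/
def dev : Term → Term
  | .var n => .var n
  | .prop => .prop
  | .type j => .type j
  | .pi A B => .pi (dev A) (dev B)
  | .sigma A B => .sigma (dev A) (dev B)
  | .lam A M => .lam (dev A) (dev M)
  | .app (.lam _ M) N => subst0 (dev M) (dev N)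
  | .app M N => .app (dev M) (dev N)
  | .pair M N B => .pair (dev M) (dev N) (dev B)
  | .proj1 (.pair M _ _) => dev M
  | .proj1 M => .proj1 (dev M)
  | .proj2 (.pair _ N _) => dev N
  | .proj2 M => .proj2 (dev M)

theorem par_triangle (h : Par M N) : Par N (dev M) := by
  induction h with
  | var => exact Par.var
  | prop => exact Par.prop
  | type => exact Par.type
  | pi _ _ ihA ihB => exact Par.pi ihA ihB
  | sigma _ _ ihA ihB => exact Par.sigma ihA ihB
  | lam _ _ ihA ihM => exact Par.lam ihA ihM
  | @app M M' N N' hM hN ihM ihN =>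
    cases hM with
    | var => exact Par.app ihM ihN
    | prop => exact Par.app ihM ihN
    | type => exact Par.app ihM ihN
    | pi _ _ => exact Par.app ihM ihN
    | sigma _ _ => exact Par.app ihM ihN
    | lam hA hP =>
      rename_i A P A' P'
      simp only [dev] at ihM ⊢
      cases ihM with
      | lam ihA ihP => exact Par.beta ihP ihN
    | app _ _ => exact Par.app ihM ihN
    | pair _ _ _ => exact Par.app ihM ihN
    | proj1 _ => exact Par.app ihM ihN
    | proj2 _ => exact Par.app ihM ihN
    | beta _ _ => exact Par.app ihM ihN
    | pr1 _ => exact Par.app ihM ihN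
    | pr2 _ => exact Par.app ihM ihN
  | pair _ _ _ ihM ihN ihB => exact Par.pair ihM ihN ihB
  | @proj1 M M' hM ihM =>
    cases hM with
    | var => exact Par.proj1 ihM
    | prop => exact Par.proj1 ihM
    | type => exact Par.proj1 ihM
    | pi _ _ => exact Par.proj1 ihM
    | sigma _ _ => exact Par.proj1 ihM
    | lam _ _ => exact Par.proj1 ihM
    | app _ _ => exact Par.proj1 ihM
    | pair hP hQ hB =>
      simp only [dev] at ihM ⊢
      cases ihM with
      | pair ihP ihQ ihB => exact Par.pr1 ihP
    | proj1 _ => exact Par.proj1 ihM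
    | proj2 _ => exact Par.proj1 ihM
    | beta _ _ => exact Par.proj1 ihM
    | pr1 _ => exact Par.proj1 ihM
    | pr2 _ => exact Par.proj1 ihM
  | @proj2 M M' hM ihM =>
    cases hM with
    | var => exact Par.proj2 ihM
    | prop => exact Par.proj2 ihM
    | type => exact Par.proj2 ihM
    | pi _ _ => exact Par.proj2 ihM
    | sigma _ _ => exact Par.proj2 ihM
    | lam _ _ => exact Par.proj2 ihM
    | app _ _ => exact Par.proj2 ihM
    | pair hP hQ hB =>
      simp only [dev] at ihM ⊢
      cases ihM with
      | pair ihP ihQ ihB => exact Par.pr2 ihQ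
    | proj1 _ => exact Par.proj2 ihM
    | proj2 _ => exact Par.proj2 ihM
    | beta _ _ => exact Par.proj2 ihM
    | pr1 _ => exact Par.proj2 ihM
    | pr2 _ => exact Par.proj2 ihM
  | @beta P P' Q Q' A _ _ ihP ihQ =>
    simp only [dev]
    exact par_subst ihQ ihP 0
  | pr1 _ ihP => simp only [dev]; exact ihP
  | pr2 _ ihQ => simp only [dev]; exact ihQ

theorem par_diamond (h1 : Par M N1) (h2 : Par M N2) :
    ∃ L, Par N1 L ∧ Par N2 L :=
  ⟨dev M, par_triangle h1, par_triangle h2⟩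

end ECC
namespace ECC

open Relation

theorem rtg_par_iff : ReflTransGen Par M N ↔ ReflTransGen Red M N := by
  constructor
  · intro h
    induction h with
    | refl => exact ReflTransGen.refl
    | tail _ h ih => exact ih.trans (rtg_of_par h)
  · intro h
    induction h with
    | refl => exact ReflTransGen.refl
    | tail _ h ih => exact ih.tail (par_of_red h)

theorem red_cr (h1 : ReflTransGen Red M N1) (h2 : ReflTransGen Red M N2) :
    ∃ L, ReflTransGen Red N1 L ∧ ReflTransGen Red N2 L := by
  have := Relation.church_rosser
    (r := Par)
    (fun a b c hab hac => by
      obtain ⟨d, hbd, hcd⟩ := par_diamond hab hac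
      exact ⟨d, ReflGen.single hbd, ReflTransGen.single hcd⟩)
    (rtg_par_iff.2 h1) (rtg_par_iff.2 h2)
  obtain ⟨L, hL1, hL2⟩ := this
  exact ⟨L, rtg_par_iff.1 hL1, rtg_par_iff.1 hL2⟩

theorem conv_of_rtg (h : ReflTransGen Red M N) : Conv M N := by
  induction h with
  | refl => exact EqvGen.refl _
  | tail _ h ih => exact EqvGen.trans _ _ _ ih (EqvGen.rel _ _ h)

theorem conv_join (h : Conv M N) :
    ∃ L, ReflTransGen Red M L ∧ ReflTransGen Red N L := by
  induction h with
  | rel a b h => exact ⟨b, ReflTransGen.single h, ReflTransGen.refl⟩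
  | refl a => exact ⟨a, ReflTransGen.refl, ReflTransGen.refl⟩
  | symm a b _ ih => obtain ⟨L, h1, h2⟩ := ih; exact ⟨L, h2, h1⟩
  | trans a b c _ _ ih1 ih2 =>
    obtain ⟨X, haX, hbX⟩ := ih1
    obtain ⟨Y, hbY, hcY⟩ := ih2
    obtain ⟨Z, hXZ, hYZ⟩ := red_cr hbX hbY
    exact ⟨Z, haX.trans hXZ, hcY.trans hYZ⟩

/-- Normal terms. -/
def Normal (B : Term) : Prop := ∀ C, ¬ Red B C

theorem rtg_of_normal (hB : Normal B) (h : ReflTransGen Red B C) : B = C := by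
  rcases (ReflTransGen.cases_head h) with h | ⟨D, hBD, _⟩
  · exact h
  · exact absurd hBD (hB D)

theorem nf_unique (h1 : ReflTransGen Red T B1) (h2 : ReflTransGen Red T B2)
    (n1 : Normal B1) (n2 : Normal B2) : B1 = B2 := by
  obtain ⟨L, hL1, hL2⟩ := red_cr h1 h2
  rw [rtg_of_normal n1 hL1, rtg_of_normal n2 hL2]

theorem conv_nf_unique (h : Conv M N) (hM : ReflTransGen Red M M0) (nM : Normal M0)
    (hN : ReflTransGen Red N N0) (nN : Normal N0) : M0 = N0 := by
  have hc : Conv M0 N0 :=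
    EqvGen.trans _ _ _ (EqvGen.symm _ _ (conv_of_rtg hM))
      (EqvGen.trans _ _ _ h (conv_of_rtg hN))
  obtain ⟨L, h1, h2⟩ := conv_join hc
  rw [rtg_of_normal nM h1, rtg_of_normal nN h2]

/- head preservation -/

theorem rtg_pi_inv (h : ReflTransGen Red (Term.pi A B) X) :
    ∃ A' B', X = .pi A' B' ∧ ReflTransGen Red A A' ∧ ReflTransGen Red B B' := by
  induction h with
  | refl => exact ⟨A, B, rfl, ReflTransGen.refl, ReflTransGen.refl⟩
  | tail _ h ih =>
    obtain ⟨A', B', rfl, hA, hB⟩ := ih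
    cases h with
    | piL hA' => exact ⟨_, B', rfl, hA.tail hA', hB⟩
    | piR hB' => exact ⟨A', _, rfl, hA, hB.tail hB'⟩

theorem rtg_sigma_inv (h : ReflTransGen Red (Term.sigma A B) X) :
    ∃ A' B', X = .sigma A' B' ∧ ReflTransGen Red A A' ∧ ReflTransGen Red B B' := by
  induction h with
  | refl => exact ⟨A, B, rfl, ReflTransGen.refl, ReflTransGen.refl⟩
  | tail _ h ih =>
    obtain ⟨A', B', rfl, hA, hB⟩ := ih
    cases h with
    | sigmaL hA' => exact ⟨_, B', rfl, hA.tail hA', hB⟩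
    | sigmaR hB' => exact ⟨A', _, rfl, hA, hB.tail hB'⟩

theorem normal_prop : Normal .prop := fun C h => by cases h

theorem normal_type (j : ℕ) : Normal (.type j) := fun C h => by cases h

theorem rtg_prop_inv (h : ReflTransGen Red Term.prop X) : X = .prop :=
  (rtg_of_normal normal_prop h).symm

theorem rtg_type_inv (h : ReflTransGen Red (Term.type j) X) : X = .type j :=
  (rtg_of_normal (normal_type j) h).symm

theorem normal_pi_inv (h : Normal (Term.pi A B)) : Normal A ∧ Normal B :=
  ⟨fun C hC => h _ (Red.piL hC), fun C hC => h _ (Red.piR hC)⟩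

theorem normal_sigma_inv (h : Normal (Term.sigma A B)) : Normal A ∧ Normal B :=
  ⟨fun C hC => h _ (Red.sigmaL hC), fun C hC => h _ (Red.sigmaR hC)⟩

end ECC
namespace ECC

open Relation

/-- Rank of a normal form. -/
def psi : Term → ℕ
  | .prop => 2
  | .type j => 3 + j
  | .pi A B => psi A * psi B
  | .sigma A B => psi A * psi B
  | _ => 1

theorem psi_pos : ∀ T, 0 < psi T := by
  intro T
  induction T with
  | prop => simp [psi]
  | type j => simp [psi]
  | pi A B ihA ihB => simpa [psi] using Nat.mul_pos ihA ihB
  | sigma A B ihA ihB => simpa [psi] using Nat.mul_pos ihA ihB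
  | var n => simp [psi]
  | lam A M _ _ => simp [psi]
  | app M N _ _ => simp [psi]
  | pair M N B _ _ _ => simp [psi]
  | proj1 M _ => simp [psi]
  | proj2 M _ => simp [psi]

open Classical in
/-- The rank function: the rank of the normal form, when it exists. -/
noncomputable def phi (T : Term) : ℕ :=
  if h : HasNF T then psi h.choose else 1
-- decidability via classical choice

theorem phi_eq (h : ReflTransGen Red T N) (hN : Normal N) : phi T = psi N := by
  have hT : HasNF T := ⟨N, h, hN⟩
  have hspec := hT.choose_spec
  rw [phi]
  rw [dif_pos hT, nf_unique hspec.1 h (fun C => hspec.2 C) hN]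

theorem phi_pos (T : Term) : 0 < phi T := by
  rw [phi]
  split_ifs <;> simp [psi_pos]

end ECC
namespace ECC

open Relation

theorem piStr_zero : PiStr 0 = Base := by
  rw [PiStr, Strata]

end ECC


/-- there is a well-defined, conversion-invariant rank function
`φ : 𝒯 → ω` with `φ(T)=2` if `T ≃ Prop`, `φ(T)=3+j` if `T ≃ Type_j`, `φ(T)=1` for all
other `T ∈ Π₀`, `φ(T) = φ(A)·φ(B)` whenever `T ≃ Qx:A.B` for `Q ∈ {Π,Σ}`, and taking
only positive values. -/
theorem exists_rank_function : ∃ φ : ECC.Term → ℕ, ECC.PhiSpec φ := by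
  refine ⟨ECC.phi, ?_, ?_, ?_, ?_, ?_, ?_⟩
  · -- conversion invariance
    rintro M N ⟨M0, hM0, nM0⟩ ⟨N0, hN0, nN0⟩ hc
    rw [ECC.phi_eq hM0 nM0, ECC.phi_eq hN0 nN0,
      ECC.conv_nf_unique hc hM0 nM0 hN0 nN0]
  · -- prop
    rintro T ⟨N, hTN, nN⟩ hc
    have : N = .prop := ECC.conv_nf_unique hc hTN nN Relation.ReflTransGen.refl
      ECC.normal_prop
    subst this
    rw [ECC.phi_eq hTN nN]; rfl
  · -- type
    rintro T j ⟨N, hTN, nN⟩ hc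
    have : N = .type j := ECC.conv_nf_unique hc hTN nN Relation.ReflTransGen.refl
      (ECC.normal_type j)
    subst this
    rw [ECC.phi_eq hTN nN]; rfl
  · -- base stratum
    intro T hT hp ht
    rw [ECC.piStr_zero] at hT
    obtain ⟨⟨N, hTN, nN⟩, hnb⟩ := hT
    have hconvN : ECC.Conv T N := ECC.conv_of_rtg hTN
    rw [ECC.phi_eq hTN (fun C => nN C)]
    cases N with
    | prop => exact absurd hconvN hp
    | type j => exact absurd hconvN (ht j)
    | pi A B =>
      exact absurd ⟨_, ⟨_, Relation.ReflTransGen.refl, nN⟩, trivial, hconvN⟩ hnb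
    | sigma A B =>
      exact absurd ⟨_, ⟨_, Relation.ReflTransGen.refl, nN⟩, trivial, hconvN⟩ hnb
    | var n => rfl
    | lam A M => rfl
    | app M N => rfl
    | pair M N B => rfl
    | proj1 M => rfl
    | proj2 M => rfl
  · -- products
    rintro T A B ⟨N, hTN, nN⟩ hc
    have nN' : ECC.Normal N := fun C => nN C
    rcases hc with hc | hc
    · have hj : ECC.Conv (ECC.Term.pi A B) N :=
        Relation.EqvGen.trans _ _ _ (Relation.EqvGen.symm _ _ hc) (ECC.conv_of_rtg hTN)
      obtain ⟨L, h1, h2⟩ := ECC.conv_join hj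
      have hLN : L = N := (ECC.rtg_of_normal nN' h2).symm
      subst hLN
      obtain ⟨A', B', rfl, hA, hB⟩ := ECC.rtg_pi_inv h1
      obtain ⟨nA, nB⟩ := ECC.normal_pi_inv nN'
      rw [ECC.phi_eq hTN nN', ECC.phi_eq hA nA, ECC.phi_eq hB nB]
      rfl
    · have hj : ECC.Conv (ECC.Term.sigma A B) N :=
        Relation.EqvGen.trans _ _ _ (Relation.EqvGen.symm _ _ hc) (ECC.conv_of_rtg hTN)
      obtain ⟨L, h1, h2⟩ := ECC.conv_join hj
      have hLN : L = N := (ECC.rtg_of_normal nN' h2).symm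
      subst hLN
      obtain ⟨A', B', rfl, hA, hB⟩ := ECC.rtg_sigma_inv h1
      obtain ⟨nA, nB⟩ := ECC.normal_sigma_inv nN'
      rw [ECC.phi_eq hTN nN', ECC.phi_eq hA nA, ECC.phi_eq hB nB]
      rfl
  · -- positivity
    intro T _
    exact ECC.phi_pos T
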